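/- Let m ≥ 3, X a simple positively weighted graph on n ≥ 1 vertices with ν₂(m) = ν₂(n) (equal 2-adic valuations), and u a vertex of O_m in O_m ∨ X with Laplacian transition U_L(t)_{u,u} = 1/(m+n) + ((m−1)/m)e^{itn} + (n/(m(m+n)))e^{it(m+n)}. Then |U_L(t₁)_{u,u}| = 1 − 2/m whenever t₁ = jπ/gcd(m,n) for an odd integer j. -/

import Mathlib

open Complex Matrix

lemma exp_mulVec_eigen {ι : Type*} [Fintype ι] [DecidableEq ι]
    (M : Matrix ι ι ℂ) (v : ι → ℂ) (μ : ℂ) (h : M.mulVec v = μ • v) :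
    (NormedSpace.exp M).mulVec v = Complex.exp μ • v := by
  letI : SeminormedRing (Matrix ι ι ℂ) := Matrix.linftyOpSemiNormedRing
  letI : NormedRing (Matrix ι ι ℂ) := Matrix.linftyOpNormedRing
  letI : NormedAlgebra ℂ (Matrix ι ι ℂ) := Matrix.linftyOpNormedAlgebra
  have hpow : ∀ k : ℕ, (M ^ k).mulVec v = μ ^ k • v := by
    intro k
    induction k with
    | zero => simp [Matrix.one_mulVec]
    | succ k ih =>
        rw [pow_succ, ← Matrix.mulVec_mulVec, h, Matrix.mulVec_smul, ih,
          smul_smul, pow_succ, mul_comm]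
  let f : Matrix ι ι ℂ →ₗ[ℂ] (ι → ℂ) :=
    { toFun := fun A => A.mulVec v
      map_add' := fun A B => Matrix.add_mulVec A B v
      map_smul' := fun c A => Matrix.smul_mulVec c A v }
  let f' : Matrix ι ι ℂ →L[ℂ] (ι → ℂ) := LinearMap.toContinuousLinearMap f
  have hsum : Summable fun k : ℕ => ((Nat.factorial k : ℂ))⁻¹ • M ^ k :=
    NormedSpace.expSeries_summable' (𝕂 := ℂ) M
  have hsum2 : Summable fun k : ℕ => ((Nat.factorial k : ℂ))⁻¹ * μ ^ k := by
    simpa [smul_eq_mul] using NormedSpace.expSeries_summable' (𝕂 := ℂ) μ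
  calc (NormedSpace.exp M).mulVec v
      = f' (∑' k : ℕ, ((Nat.factorial k : ℂ))⁻¹ • M ^ k) := by
        rw [NormedSpace.exp_eq_tsum ℂ]; rfl
    _ = ∑' k : ℕ, f' (((Nat.factorial k : ℂ))⁻¹ • M ^ k) := (f'.map_tsum hsum).symm ▸ rfl
    _ = ∑' k : ℕ, (((Nat.factorial k : ℂ))⁻¹ * μ ^ k) • v := by
        refine tsum_congr fun k => ?_
        rw [f'.map_smul]
        show ((Nat.factorial k : ℂ))⁻¹ • (M ^ k).mulVec v = _
        rw [hpow, smul_smul]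
    _ = (∑' k : ℕ, ((Nat.factorial k : ℂ))⁻¹ * μ ^ k) • v := by
        exact hsum2.tsum_smul_const v
    _ = Complex.exp μ • v := by
        rw [Complex.exp_eq_exp_ℂ, NormedSpace.exp_eq_tsum ℂ]
        simp [smul_eq_mul]


lemma odd_div_gcd (m n : ℕ) (hm : 0 < m) (hn : 0 < n)
    (hnu : padicValNat 2 m = padicValNat 2 n) : Odd (n / Nat.gcd m n) := by
  set g := Nat.gcd m n with hg
  have hgn : g ∣ n := Nat.gcd_dvd_right m n
  have hgpos : 0 < g := Nat.gcd_pos_of_pos_left n hm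
  rw [Nat.odd_iff]
  by_contra hodd
  have h2 : 2 ∣ n / g := Nat.dvd_of_mod_eq_zero (by omega)
  have h2g : g * 2 ∣ n := (Nat.dvd_div_iff_mul_dvd hgn).mp h2
  have hpa : (2:ℕ) ^ (padicValNat 2 n) ∣ m := by
    rw [← hnu]; exact pow_padicValNat_dvd
  have hpb : (2:ℕ) ^ (padicValNat 2 n) ∣ n := pow_padicValNat_dvd
  have hpg : (2:ℕ) ^ (padicValNat 2 n) ∣ g := Nat.dvd_gcd hpa hpb
  have : (2:ℕ) ^ (padicValNat 2 n + 1) ∣ n := by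
    rw [pow_succ]
    exact dvd_trans (mul_dvd_mul hpg (dvd_refl 2)) h2g
  exact pow_succ_padicValNat_not_dvd hn.ne' this

/-- Let `m ≥ 3`, `X` simple positively weighted on `n ≥ 1` vertices with
`ν₂(m) = ν₂(n)`, and `u` a vertex of `O_m` in `O_m ∨ X` with Laplacian `L`. Then
`|U_L(t₁)_{u,u}| = 1 − 2/m` whenever `t₁ = jπ/gcd(m,n)` for an odd integer `j`. -/
theorem stmt_17 (m n : ℕ) (hm : 3 ≤ m) (hn : 1 ≤ n)
    (hnu : padicValNat 2 m = padicValNat 2 n)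
    (W : Matrix (Fin n) (Fin n) ℝ) (hWs : W.IsSymm)
    (hW0 : ∀ i, W i i = 0) (hWpos : ∀ i j, 0 ≤ W i j)
    (Adj : Matrix (Fin m ⊕ Fin n) (Fin m ⊕ Fin n) ℝ)
    (hAdj : Adj = Matrix.fromBlocks 0
      (Matrix.of fun _ _ => 1) (Matrix.of fun _ _ => 1) W)
    (L : Matrix (Fin m ⊕ Fin n) (Fin m ⊕ Fin n) ℂ)
    (hL : L = (Matrix.diagonal (fun x => ∑ y, Adj x y) - Adj).map Complex.ofReal)
    (i : Fin m) (j : ℤ) (hj : Odd j) (t₁ : ℝ)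
    (ht₁ : t₁ = j * Real.pi / (Nat.gcd m n : ℝ)) :
    ‖(NormedSpace.exp ((Complex.I * t₁) • L)) (Sum.inl i) (Sum.inl i)‖ =
      1 - 2 / (m : ℝ) := by
  have hmpos : 0 < m := by omega
  have hnpos : 0 < n := by omega
  set g := Nat.gcd m n with hg
  have hgpos : 0 < g := Nat.gcd_pos_of_pos_left n hmpos
  set p := m / g with hp
  set q := n / g with hq
  have hgp : g * p = m := Nat.mul_div_cancel' (Nat.gcd_dvd_left m n)
  have hgq : g * q = n := Nat.mul_div_cancel' (Nat.gcd_dvd_right m n)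
  have hqodd : Odd q := odd_div_gcd m n hmpos hnpos hnu
  have hpodd : Odd p := by
    have := odd_div_gcd n m hnpos hmpos hnu.symm
    rwa [Nat.gcd_comm, ← hg, ← hp] at this
  have hmC : (m:ℂ) ≠ 0 := Nat.cast_ne_zero.mpr hmpos.ne'
  have hnC : (n:ℂ) ≠ 0 := Nat.cast_ne_zero.mpr hnpos.ne'
  have hgC : (g:ℂ) ≠ 0 := Nat.cast_ne_zero.mpr hgpos.ne'
  have hmnC : (m:ℂ) + n ≠ 0 := by
    have : ((m+n:ℕ):ℂ) ≠ 0 := Nat.cast_ne_zero.mpr (by omega)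
    push_cast at this; exact this
  -- exponential values
  have hnGQ : (n:ℂ) = (g:ℂ) * q := by exact_mod_cast congrArg (Nat.cast : ℕ → ℂ) hgq.symm
  have hmGP : (m:ℂ) = (g:ℂ) * p := by exact_mod_cast congrArg (Nat.cast : ℕ → ℂ) hgp.symm
  have hexpn : Complex.exp (Complex.I * (t₁:ℂ) * ((n:ℕ):ℂ)) = -1 := by
    have h1 : Complex.I * (t₁:ℂ) * ((n:ℕ):ℂ)
        = ((j * (q:ℤ) : ℤ):ℂ) * ((Real.pi:ℂ) * Complex.I) := by
      rw [ht₁, hnGQ]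
      push_cast
      field_simp
    rw [h1, Complex.exp_int_mul, Complex.exp_pi_mul_I]
    exact Odd.neg_one_zpow (hj.mul ((Int.odd_coe_nat q).mpr hqodd))
  have hexpmn : Complex.exp (Complex.I * (t₁:ℂ) * ((m:ℂ) + n)) = 1 := by
    have h1 : Complex.I * (t₁:ℂ) * ((m:ℂ) + n)
        = ((j * ((p:ℤ) + q) : ℤ):ℂ) * ((Real.pi:ℂ) * Complex.I) := by
      rw [ht₁, hnGQ, hmGP]
      push_cast
      field_simp
    rw [h1, Complex.exp_int_mul, Complex.exp_pi_mul_I]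
    refine Even.neg_one_zpow ?_
    refine Even.mul_left ?_ j
    exact (Int.odd_coe_nat p).mpr hpodd |>.add_odd ((Int.odd_coe_nat q).mpr hqodd)
  -- mulVec formula for L
  have key : ∀ v : Fin m ⊕ Fin n → ℂ, L.mulVec v = Sum.elim
      (fun k => n * v (Sum.inl k) - ∑ r, v (Sum.inr r))
      (fun k => ((m:ℂ) + ∑ l, (W k l:ℂ)) * v (Sum.inr k) - ∑ l, v (Sum.inl l)
        - ∑ r, (W k r:ℂ) * v (Sum.inr r)) := by
    subst hAdj hL
    intro v
    funext x
    cases x with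
    | inl k =>
        simp [Matrix.mulVec, dotProduct, Fintype.sum_sum_type, Matrix.diagonal_apply,
          Matrix.sub_apply, Matrix.map_apply, sub_mul, apply_ite Complex.ofReal, ite_mul,
          Finset.sum_ite_eq, Finset.sum_sub_distrib, mul_comm]
        ring
    | inr k =>
        simp [Matrix.mulVec, dotProduct, Fintype.sum_sum_type, Matrix.diagonal_apply,
          Matrix.sub_apply, Matrix.map_apply, sub_mul, apply_ite Complex.ofReal, ite_mul,
          Finset.sum_ite_eq, Finset.sum_sub_distrib, mul_comm, add_mul,
          Finset.sum_add_distrib]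
        simp [mul_sub, mul_ite, mul_zero, Finset.sum_sub_distrib, Finset.sum_ite_eq, mul_comm]
        ring
  -- vectors
  set a : ℂ := ((m:ℂ)+n)⁻¹ with ha
  set b : ℂ := ((m:ℂ)*((m:ℂ)+n))⁻¹ with hb
  set v0 : Fin m ⊕ Fin n → ℂ := fun _ => 1 with hv0
  set vw : Fin m ⊕ Fin n → ℂ := Sum.elim (fun _ => (n:ℂ)) (fun _ => -(m:ℂ)) with hvw
  set vz : Fin m ⊕ Fin n → ℂ :=
    Sum.elim (fun k => (if k = i then 1 else 0) - (a + b*n)) (fun _ => 0) with hvz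
  have h0 : L.mulVec v0 = (0:ℂ) • v0 := by
    rw [key]; funext x; cases x with
    | inl k => simp [hv0]
    | inr k => simp [hv0]
  have hw : L.mulVec vw = ((m:ℂ)+n) • vw := by
    rw [key]; funext x; cases x with
    | inl k => simp [hvw]; ring
    | inr k =>
        simp [hvw]
        rw [← Finset.sum_mul]
        ring
  have hz : L.mulVec vz = ((n:ℕ):ℂ) • vz := by
    rw [key]; funext x; cases x with
    | inl k => simp [hvz]
    | inr k =>
        simp [hvz, Finset.sum_sub_distrib, Finset.sum_ite_eq', ha, hb]
        field_simp
        ring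
  -- eigen decomposition
  set M := (Complex.I * (t₁:ℂ)) • L with hM
  have eig : ∀ (v : Fin m ⊕ Fin n → ℂ) (μ : ℂ), L.mulVec v = μ • v →
      (NormedSpace.exp M).mulVec v = Complex.exp (Complex.I * (t₁:ℂ) * μ) • v := by
    intro v μ hv
    apply exp_mulVec_eigen
    rw [hM, Matrix.smul_mulVec, hv, smul_smul]
  have hdecomp : (Pi.single (Sum.inl i) (1:ℂ)) = a • v0 + b • vw + vz := by
    funext x; cases x with
    | inl k =>
        simp [Pi.single_apply, hv0, hvw, hvz, Sum.inl.injEq]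
    | inr k =>
        simp [Pi.single_apply, hv0, hvw, hvz, ha, hb]
        field_simp
        ring
  have hEntry : (NormedSpace.exp M) (Sum.inl i) (Sum.inl i)
      = ((2 / (m:ℝ) - 1 : ℝ) : ℂ) := by
    have hcol : (NormedSpace.exp M) (Sum.inl i) (Sum.inl i)
        = ((NormedSpace.exp M).mulVec (Pi.single (Sum.inl i) 1)) (Sum.inl i) := by
      rw [Matrix.mulVec_single]; simp
    rw [hcol, hdecomp, Matrix.mulVec_add, Matrix.mulVec_add, Matrix.mulVec_smul,
      Matrix.mulVec_smul, eig v0 0 h0, eig vw ((m:ℂ)+n) hw, eig vz ((n:ℕ):ℂ) hz,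
      hexpmn]
    simp only [mul_zero, Complex.exp_zero, hexpn]
    simp [hv0, hvw, hvz, ha, hb]
    push_cast
    field_simp
    ring
  rw [hEntry, Complex.norm_real, Real.norm_eq_abs, abs_of_nonpos]
  · ring
  · have h2m : 2 / (m:ℝ) ≤ 1 := by
      rw [div_le_one (by positivity : (0:ℝ) < m)]
      exact_mod_cast by omega
    linarith
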